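/- Let the data (a_1,…,a_n) with labels (y_1,…,y_n) be separable with margin μ > 0, and let R := max_{i∈[n]} ‖a_i‖. Consider the Normalized Batch Perceptron iterates started from θ̂₀ = 0: for t ≥ 0, let S_t := {i ∈ [n] : y_i a_iᵀθ̂_t ≤ 0}; if S_t ≠ ∅ set θ̂_{t+1} = θ̂_t + (1/|S_t|) Σ_{i∈S_t} y_i a_i, and θ̂_{t+1} = θ̂_t otherwise. Then there exists t with 0 ≤ t ≤ R²/μ² such that S_t = ∅, i.e., Normalized Batch Perceptron solves the classification task after at most R²/μ² iterations. -/

import Mathlib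

open scoped RealInnerProductSpace BigOperators

/-- **Normalized Batch Perceptron convergence** (Theorem, `1/|S_t|` normalization). The
Normalized Batch Perceptron started from `0` solves the classification task after at most
`R² / μ²` iterations. -/
theorem normalized_batch_perceptron_converges {d n : ℕ} (hn : 0 < n)
    (a : Fin n → EuclideanSpace ℝ (Fin d)) (y : Fin n → ℝ)
    (hy : ∀ i, y i = 1 ∨ y i = -1)
    (μ R : ℝ) (hμ : 0 < μ)
    (θstar : EuclideanSpace ℝ (Fin d)) (hstar : ‖θstar‖ = 1)
    (hmargin : ∀ i, μ ≤ y i * ⟪a i, θstar⟫)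
    (hR : IsGreatest (Set.range fun i => ‖a i‖) R)
    (θhat : ℕ → EuclideanSpace ℝ (Fin d))
    (h0 : θhat 0 = 0)
    (hstep : ∀ t, (Finset.univ.filter (fun i => y i * ⟪a i, θhat t⟫ ≤ 0)).Nonempty →
      θhat (t + 1) = θhat t +
        (((Finset.univ.filter (fun i => y i * ⟪a i, θhat t⟫ ≤ 0)).card : ℝ))⁻¹ •
          ∑ i ∈ Finset.univ.filter (fun i => y i * ⟪a i, θhat t⟫ ≤ 0), y i • a i)
    (hstay : ∀ t, Finset.univ.filter (fun i => y i * ⟪a i, θhat t⟫ ≤ 0) = ∅ →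
      θhat (t + 1) = θhat t) :
    ∃ t : ℕ, (t : ℝ) ≤ R ^ 2 / μ ^ 2 ∧ ∀ i, 0 < y i * ⟪a i, θhat t⟫ := by
  classical
  have hR0 : 0 ≤ R := le_trans (norm_nonneg (a ⟨0, hn⟩)) (hR.2 ⟨⟨0, hn⟩, rfl⟩)
  have hyabs : ∀ i, |y i| = 1 := by
    intro i; rcases hy i with h | h <;> simp [h]
  -- key invariant
  have key : ∀ t : ℕ,
      (∀ s < t, (Finset.univ.filter (fun i => y i * ⟪a i, θhat s⟫ ≤ 0)).Nonempty) →
      (t : ℝ) * μ ≤ ⟪θhat t, θstar⟫ ∧ ‖θhat t‖ ^ 2 ≤ (t : ℝ) * R ^ 2 := by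
    intro t
    induction t with
    | zero => intro _; simp [h0]
    | succ t ih =>
      intro h
      have hne := h t (Nat.lt_succ_self t)
      obtain ⟨h1, h2⟩ := ih (fun s hs => h s (hs.trans (Nat.lt_succ_self t)))
      set St := Finset.univ.filter (fun i => y i * ⟪a i, θhat t⟫ ≤ 0) with hSt
      have hcard : (0:ℝ) < (St.card : ℝ) := by exact_mod_cast Finset.card_pos.mpr hne
      set c : ℝ := ((St.card : ℝ))⁻¹ with hc
      have hc0 : 0 ≤ c := inv_nonneg.mpr hcard.le
      set g : EuclideanSpace ℝ (Fin d) := ∑ i ∈ St, y i • a i with hg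
      have hstep' : θhat (t+1) = θhat t + c • g := hstep t hne
      constructor
      · -- inner product growth
        have hgstar : (St.card : ℝ) * μ ≤ ⟪g, θstar⟫ := by
          rw [hg, sum_inner]
          calc (St.card : ℝ) * μ = ∑ _i ∈ St, μ := by
                rw [Finset.sum_const, nsmul_eq_mul]
            _ ≤ ∑ i ∈ St, ⟪y i • a i, θstar⟫ := by
                apply Finset.sum_le_sum
                intro i _
                rw [real_inner_smul_left]
                exact hmargin i
        have : ⟪θhat (t+1), θstar⟫ = ⟪θhat t, θstar⟫ + c * ⟪g, θstar⟫ := by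
          rw [hstep', inner_add_left, real_inner_smul_left]
        rw [this]
        push_cast
        have hμle : μ ≤ c * ⟪g, θstar⟫ := by
          have := mul_le_mul_of_nonneg_left hgstar hc0
          calc μ = c * ((St.card : ℝ) * μ) := by
                rw [← mul_assoc, inv_mul_cancel₀ hcard.ne', one_mul]
            _ ≤ c * ⟪g, θstar⟫ := this
        linarith
      · -- norm growth
        have hθg : ⟪θhat t, g⟫ ≤ 0 := by
          rw [hg, inner_sum]
          apply Finset.sum_nonpos
          intro i hi
          rw [real_inner_smul_right, real_inner_comm]
          exact (Finset.mem_filter.mp hi).2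
        have hgnorm : ‖g‖ ≤ (St.card : ℝ) * R := by
          calc ‖g‖ ≤ ∑ i ∈ St, ‖y i • a i‖ := norm_sum_le _ _
            _ ≤ ∑ _i ∈ St, R := by
                apply Finset.sum_le_sum
                intro i _
                rw [norm_smul, Real.norm_eq_abs, hyabs i, one_mul]
                exact hR.2 ⟨i, rfl⟩
            _ = (St.card : ℝ) * R := by rw [Finset.sum_const, nsmul_eq_mul]
        have hcg : ‖c • g‖ ≤ R := by
          rw [norm_smul, Real.norm_eq_abs, abs_of_nonneg hc0]
          calc c * ‖g‖ ≤ c * ((St.card : ℝ) * R) :=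
                mul_le_mul_of_nonneg_left hgnorm hc0
            _ = R := by rw [← mul_assoc, inv_mul_cancel₀ hcard.ne', one_mul]
        have hexp : ‖θhat (t+1)‖ ^ 2 =
            ‖θhat t‖ ^ 2 + 2 * (c * ⟪θhat t, g⟫) + ‖c • g‖ ^ 2 := by
          rw [hstep', @norm_add_sq_real, real_inner_smul_right]
        rw [hexp]
        have hcg2 : ‖c • g‖ ^ 2 ≤ R ^ 2 := by
          have := sq_le_sq' (by linarith [norm_nonneg (c • g)]) hcg
          simpa using this
        have : c * ⟪θhat t, g⟫ ≤ 0 := mul_nonpos_of_nonneg_of_nonpos hc0 hθg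
        push_cast
        nlinarith
  -- existence of a time where the filter is empty
  have hex : ∃ t, Finset.univ.filter (fun i => y i * ⟪a i, θhat t⟫ ≤ 0) = ∅ := by
    by_contra hno
    push_neg at hno
    obtain ⟨N, hN⟩ := exists_nat_gt (R ^ 2 / μ ^ 2)
    have hNpos : 0 < N := by
      by_contra h'
      push_neg at h'
      interval_cases N
      simp at hN
      have : (0:ℝ) ≤ R ^ 2 / μ ^ 2 := by positivity
      linarith
    have hinv := key N (fun s _ => hno s)
    obtain ⟨h1, h2⟩ := hinv
    have hcs : ⟪θhat N, θstar⟫ ≤ ‖θhat N‖ := by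
      calc ⟪θhat N, θstar⟫ ≤ ‖θhat N‖ * ‖θstar‖ := real_inner_le_norm _ _
        _ = ‖θhat N‖ := by rw [hstar, mul_one]
    have hNμ : (N : ℝ) * μ ≤ ‖θhat N‖ := le_trans h1 hcs
    have hsq : ((N : ℝ) * μ) ^ 2 ≤ (N : ℝ) * R ^ 2 := by
      calc ((N : ℝ) * μ) ^ 2 ≤ ‖θhat N‖ ^ 2 := by
            apply sq_le_sq' _ hNμ
            linarith [norm_nonneg (θhat N), mul_nonneg (Nat.cast_nonneg N : (0:ℝ) ≤ N) hμ.le]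
        _ ≤ (N : ℝ) * R ^ 2 := h2
    have hN1 : (1 : ℝ) ≤ N := by exact_mod_cast hNpos
    have : (N : ℝ) ≤ R ^ 2 / μ ^ 2 := by
      rw [le_div_iff₀ (by positivity)]
      nlinarith
    linarith
  -- take the least such time
  let T := Nat.find hex
  have hT : Finset.univ.filter (fun i => y i * ⟪a i, θhat T⟫ ≤ 0) = ∅ := Nat.find_spec hex
  have hbefore : ∀ s < T, (Finset.univ.filter (fun i => y i * ⟪a i, θhat s⟫ ≤ 0)).Nonempty :=
    fun s hs => Finset.nonempty_iff_ne_empty.mpr (Nat.find_min hex hs)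
  obtain ⟨h1, h2⟩ := key T hbefore
  refine ⟨T, ?_, ?_⟩
  · rcases Nat.eq_zero_or_pos T with h | h
    · simp only [h, Nat.cast_zero]; positivity
    · have hcs : ⟪θhat T, θstar⟫ ≤ ‖θhat T‖ := by
        calc ⟪θhat T, θstar⟫ ≤ ‖θhat T‖ * ‖θstar‖ := real_inner_le_norm _ _
          _ = ‖θhat T‖ := by rw [hstar, mul_one]
      have hTμ : (T : ℝ) * μ ≤ ‖θhat T‖ := le_trans h1 hcs
      have hsq : ((T : ℝ) * μ) ^ 2 ≤ (T : ℝ) * R ^ 2 := by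
        calc ((T : ℝ) * μ) ^ 2 ≤ ‖θhat T‖ ^ 2 := by
              apply sq_le_sq' _ hTμ
              linarith [norm_nonneg (θhat T), mul_nonneg (Nat.cast_nonneg T : (0:ℝ) ≤ T) hμ.le]
          _ ≤ (T : ℝ) * R ^ 2 := h2
      have hT1 : (1 : ℝ) ≤ T := by exact_mod_cast h
      rw [le_div_iff₀ (by positivity)]
      nlinarith
  · intro i
    by_contra h'
    push_neg at h'
    have : i ∈ Finset.univ.filter (fun j => y j * ⟪a j, θhat T⟫ ≤ 0) :=
      Finset.mem_filter.mpr ⟨Finset.mem_univ i, h'⟩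
    rw [hT] at this
    exact absurd this (Finset.notMem_empty i)
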